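/- arXiv:math/0201152 — 4 statements merged into one kernel-verified Lean document; each statement's English description precedes it below -/
import Mathlib

section
/- Let S be any nonempty closed shift-invariant subset (subshift) of A^ℤ for a finite alphabet A, and let f, g : A → (0,∞) be two positive functions. Then the tiling space T_f is homeomorphic to the tiling space T_g. -/
open Filter Topology Matrix MeasureTheory

namespace Tilings

variable {n : ℕ}

/-- The shift by `k` on bi-infinite sequences: `(shiftZ k u) i = u (i + k)`. -/
def shiftZ (k : ℤ) (u : ℤ → Fin n) : ℤ → Fin n := fun i => u (i + k)

/-- The left shift. -/
abbrev shift (u : ℤ → Fin n) : ℤ → Fin n := shiftZ 1 u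

/-- The (signed) Birkhoff sum `f (u 0) + f (u 1) + ⋯ + f (u (k-1))` (for `k ≥ 0`;
for `k < 0` it is `-(f (u (-1)) + ⋯ + f (u k))`). -/
noncomputable def birkhoff (f : Fin n → ℝ) (u : ℤ → Fin n) (k : ℤ) : ℝ :=
  (∑ i ∈ Finset.range k.toNat, f (u (i : ℤ))) -
    ∑ i ∈ Finset.range (-k).toNat, f (u (-((i : ℤ) + 1)))

/-- The relation on `S × ℝ` generated by `(u, f u₀) ~ (shift u, 0)`:
`(u, x) ~ (shiftZ k u, x - (f (u 0) + ⋯ + f (u (k-1))))` for every `k : ℤ`. -/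
def tilingRel (S : Set (ℤ → Fin n)) (f : Fin n → ℝ) :
    (S × ℝ) → (S × ℝ) → Prop := fun p q =>
  ∃ k : ℤ, (q.1 : ℤ → Fin n) = shiftZ k (p.1 : ℤ → Fin n) ∧
    q.2 = p.2 - birkhoff f (p.1 : ℤ → Fin n) k

/-- The tiling space `T_f`: the quotient of `S × ℝ` by `(u, f u₀) ~ (shift u, 0)`. -/
def TilingSpace (S : Set (ℤ → Fin n)) (f : Fin n → ℝ) : Type :=
  Quot (tilingRel S f)

noncomputable instance (S : Set (ℤ → Fin n)) (f : Fin n → ℝ) :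
    TopologicalSpace (TilingSpace S f) :=
  inferInstanceAs (TopologicalSpace (Quot _))

/-- The translation flow on the tiling space: `T_t [(u, x)] = [(u, x + t)]`. -/
def flow (S : Set (ℤ → Fin n)) (f : Fin n → ℝ) (t : ℝ) :
    TilingSpace S f → TilingSpace S f :=
  Quot.map (fun p => (p.1, p.2 + t)) (by
    rintro ⟨u, x⟩ ⟨v, y⟩ ⟨k, h1, h2⟩
    exact ⟨k, h1, by dsimp at h2 ⊢; linarith⟩)

/-- `k` belongs to the point spectrum of `T_f` iff there is a nonzero continuous
eigenfunction `F` with `F (T_t x) = e^{i k t} F x`. -/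
def pointSpectrum (S : Set (ℤ → Fin n)) (f : Fin n → ℝ) : Set ℝ :=
  {k | ∃ F : TilingSpace S f → ℂ, Continuous F ∧ F ≠ 0 ∧
    ∀ (x : TilingSpace S f) (t : ℝ),
      F (flow S f t x) = Complex.exp (Complex.I * (k : ℂ) * (t : ℂ)) * F x}

/-- The translation flows on `T_f` and `T_g` are topologically conjugate. -/
def Conjugate (S : Set (ℤ → Fin n)) (f g : Fin n → ℝ) : Prop :=
  ∃ φ : TilingSpace S f ≃ₜ TilingSpace S g,
    ∀ (x : TilingSpace S f) (t : ℝ), φ (flow S f t x) = flow S g t (φ x)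

/-- Applying a substitution to a finite word. -/
def substWord (σ : Fin n → List (Fin n)) (w : List (Fin n)) : List (Fin n) :=
  (w.map σ).flatten

/-- The word `w` occurs (as a consecutive block) in the bi-infinite sequence `u`. -/
def occursIn (w : List (Fin n)) (u : ℤ → Fin n) : Prop :=
  ∃ r : ℤ, ∀ i : Fin w.length, u (r + (i : ℕ)) = w.get i

/-- The word `w` belongs to the language of `σ`: it occurs in some `σ^k(a)`. -/
def InLanguage (σ : Fin n → List (Fin n)) (w : List (Fin n)) : Prop :=
  ∃ (k : ℕ) (a : Fin n), w <:+: (substWord σ)^[k] [a]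

/-- The substitution subshift of `σ`: all bi-infinite sequences all of whose
finite subwords belong to the language of `σ`.  (For a primitive aperiodic `σ`
this is the closure of the shift orbit of a sequence whose right half is fixed
by `σ`, and it is minimal.) -/
def SubshiftOf (σ : Fin n → List (Fin n)) : Set (ℤ → Fin n) :=
  {u | ∀ w : List (Fin n), occursIn w u → InLanguage σ w}

/-- The substitution matrix (over ℝ): the `(i,j)` entry is the number of
occurrences of the letter `j` in `σ i`. -/
noncomputable def substMatrix (σ : Fin n → List (Fin n)) : Matrix (Fin n) (Fin n) ℝ :=
  Matrix.of fun i j => ((σ i).count j : ℝ)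

/-- `σ` is primitive: some power of its substitution matrix has strictly positive entries. -/
def Primitive (σ : Fin n → List (Fin n)) : Prop :=
  ∃ k : ℕ, 0 < k ∧ ∀ i j, 0 < ((substMatrix σ) ^ k) i j

/-- `σ` is aperiodic: its subshift contains no shift-periodic sequence. -/
def Aperiodic (σ : Fin n → List (Fin n)) : Prop :=
  ∀ u ∈ SubshiftOf σ, ∀ p : ℤ, p ≠ 0 → ¬ (∀ i, u (i + p) = u i)

/-- The population (column) vector of a word, as a real vector:
`popVec w j` is the number of occurrences of the letter `j` in `w`. -/
def popVec (w : List (Fin n)) : Fin n → ℝ := fun j => (w.count j : ℝ)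

/-- `w` is a recurrence word in `u`: `w = u_r ⋯ u_s` occurs in `u` and `u_{s+1} = u_r`. -/
def IsRecurrenceWordIn (u : ℤ → Fin n) (w : List (Fin n)) : Prop :=
  w ≠ [] ∧ ∃ r : ℤ, (∀ i : Fin w.length, u (r + (i : ℕ)) = w.get i) ∧
    u (r + w.length) = u r

/-- `v` is a recurrence vector of the subshift `S`: the population vector of a
recurrence word of some `u ∈ S`. -/
def IsRecurrenceVector (S : Set (ℤ → Fin n)) (v : Fin n → ℝ) : Prop :=
  ∃ u ∈ S, ∃ w : List (Fin n), IsRecurrenceWordIn u w ∧ v = popVec w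

/-- A full recurrence vector: `v, Mv, …, M^{n-1}v` are linearly independent. -/
def IsFullRecurrenceVector (σ : Fin n → List (Fin n)) (v : Fin n → ℝ) : Prop :=
  IsRecurrenceVector (SubshiftOf σ) v ∧
    LinearIndependent ℝ (fun i : Fin n => ((substMatrix σ) ^ (i : ℕ)).mulVec v)

/-- The `L`-length of a word: `L` dotted with the population vector. -/
def wordLength (L : Fin n → ℝ) (w : List (Fin n)) : ℝ :=
  dotProduct L (popVec w)

/-- The word `w` occurs in (some element of) the subshift `S`. -/
def OccursInSubshift (S : Set (ℤ → Fin n)) (w : List (Fin n)) : Prop :=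
  ∃ u ∈ S, occursIn w u

/-- `w'` is periodic with (letter-)period `m`. -/
def PeriodicWithPeriod (w' : List (Fin n)) (m : ℕ) : Prop :=
  ∀ (i : ℕ) (h : i + m < w'.length),
    w'.get ⟨i + m, h⟩ = w'.get ⟨i, by omega⟩

/-- `v` is a repetition vector of degree `p` for the tiling space with length
vector `L`, representing the word `w`. -/
def IsRepetitionVectorWith (S : Set (ℤ → Fin n)) (L : Fin n → ℝ) (p : ℝ)
    (v : Fin n → ℝ) (w : List (Fin n)) : Prop :=
  IsRecurrenceVector S v ∧ popVec w = v ∧ w ≠ [] ∧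
    ∃ w' : List (Fin n), w <:+: w' ∧ PeriodicWithPeriod w' w.length ∧
      p * wordLength L w ≤ wordLength L w' ∧ OccursInSubshift S w'

/-- `v` is a repetition vector of degree `p` for the tiling space with length vector `L`. -/
def IsRepetitionVector (S : Set (ℤ → Fin n)) (L : Fin n → ℝ) (p : ℝ)
    (v : Fin n → ℝ) : Prop :=
  ∃ w : List (Fin n), IsRepetitionVectorWith S L p v w

/-- The distance from a real number to the nearest integer. -/
noncomputable def distToInt (x : ℝ) : ℝ := |x - round x|

/-- The cylinder set `[w] × I` in the tiling space: classes of `(u, t)` with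
`u₀ ⋯ u_k = w` and `t ∈ I`. -/
def cylinder (S : Set (ℤ → Fin n)) (f : Fin n → ℝ) (w : List (Fin n)) (I : Set ℝ) :
    Set (TilingSpace S f) :=
  {x | ∃ (u : S) (t : ℝ), t ∈ I ∧ x = Quot.mk _ (u, t) ∧
    ∀ i : Fin w.length, (u : ℤ → Fin n) ((i : ℕ) : ℤ) = w.get i}

/-- `ℤ[1/m]` as a subset of ℝ: rationals of the form `j / m^r`. -/
def ZinvSet (m : ℕ) : Set ℝ :=
  {x | ∃ (j : ℤ) (r : ℕ), x = (j : ℝ) / (m : ℝ) ^ r}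

-- auxiliary lemmas
lemma birkhoff_zero (f : Fin n → ℝ) (u : ℤ → Fin n) : birkhoff f u 0 = 0 := by
  simp [birkhoff]

lemma birkhoff_succ (f : Fin n → ℝ) (u : ℤ → Fin n) (k : ℤ) :
    birkhoff f u (k + 1) = birkhoff f u k + f (u k) := by
  rcases le_or_gt 0 k with hk | hk
  · have h1 : (k + 1).toNat = k.toNat + 1 := by omega
    have h2 : (-(k + 1)).toNat = 0 := by omega
    have h3 : (-k).toNat = 0 := by omega
    have h4 : ((k.toNat : ℤ)) = k := by omega
    rw [birkhoff, birkhoff, h1, h2, h3, Finset.sum_range_succ, h4]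
    simp
  · have h1 : (k + 1).toNat = 0 := by omega
    have h2 : k.toNat = 0 := by omega
    have h3 : (-k).toNat = (-(k + 1)).toNat + 1 := by omega
    rw [birkhoff, birkhoff, h1, h2, h3, Finset.sum_range_succ]
    have h5 : -(((-(k + 1)).toNat : ℤ) + 1) = k := by omega
    rw [h5]; ring

lemma birkhoff_cocycle (f : Fin n → ℝ) (u : ℤ → Fin n) (a b : ℤ) :
    birkhoff f u (a + b) = birkhoff f u a + birkhoff f (shiftZ a u) b := by
  induction b using Int.induction_on with
  | zero => simp [birkhoff_zero]
  | succ m ih =>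
      have e : a + ((m : ℤ) + 1) = (a + m) + 1 := by ring
      rw [e, birkhoff_succ, ih, birkhoff_succ]
      have hw : (shiftZ a u) m = u (a + m) := by
        show u ((m : ℤ) + a) = u (a + m); rw [add_comm]
      rw [hw]; ring
  | pred m ih =>
      have e1 : a + (-(m : ℤ) - 1) + 1 = a + (-(m : ℤ)) := by ring
      have h1 := birkhoff_succ f u (a + (-(m : ℤ) - 1))
      rw [e1] at h1
      have h2 := birkhoff_succ f (shiftZ a u) (-(m : ℤ) - 1)
      have e2 : (-(m : ℤ) - 1) + 1 = -(m : ℤ) := by ring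
      rw [e2] at h2
      have hw : (shiftZ a u) (-(m : ℤ) - 1) = u (a + (-(m : ℤ) - 1)) := by
        show u ((-(m : ℤ) - 1) + a) = u (a + (-(m : ℤ) - 1)); rw [add_comm]
      rw [hw] at h2
      linarith

lemma birkhoff_shift (f : Fin n → ℝ) (u : ℤ → Fin n) (a b : ℤ) :
    birkhoff f (shiftZ a u) b = birkhoff f u (a + b) - birkhoff f u a := by
  rw [birkhoff_cocycle]; ring

lemma birkhoff_pos {f : Fin n → ℝ} (hf : ∀ i, 0 < f i) (u : ℤ → Fin n) {m : ℤ}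
    (hm : 0 < m) : 0 < birkhoff f u m := by
  have h3 : (-m).toNat = 0 := by omega
  rw [birkhoff, h3]
  simp only [Finset.range_zero, Finset.sum_empty, sub_zero]
  apply Finset.sum_pos (fun i _ => hf _)
  simp only [Finset.nonempty_range_iff]
  omega

lemma birkhoff_lt {f : Fin n → ℝ} (hf : ∀ i, 0 < f i) (u : ℤ → Fin n) {a b : ℤ}
    (h : a < b) : birkhoff f u a < birkhoff f u b := by
  have e : b = a + (b - a) := by ring
  rw [e, birkhoff_cocycle]
  have := birkhoff_pos hf (shiftZ a u) (m := b - a) (by omega)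
  linarith

lemma birkhoff_mono {f : Fin n → ℝ} (hf : ∀ i, 0 < f i) (u : ℤ → Fin n) {a b : ℤ}
    (h : a ≤ b) : birkhoff f u a ≤ birkhoff f u b := by
  rcases eq_or_lt_of_le h with rfl | h
  · exact le_refl _
  · exact (birkhoff_lt hf u h).le


lemma birkhoff_ge {f : Fin n → ℝ} {c : ℝ} (hc : ∀ i, c ≤ f i) (u : ℤ → Fin n)
    {k : ℤ} (hk : 0 ≤ k) : c * k ≤ birkhoff f u k := by
  have h3 : (-k).toNat = 0 := by omega
  rw [birkhoff, h3]
  simp only [Finset.range_zero, Finset.sum_empty, sub_zero]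
  have hcast : (k.toNat : ℝ) = (k : ℝ) := by exact_mod_cast congrArg (fun z : ℤ => (z : ℝ)) (Int.toNat_of_nonneg hk)
  calc c * k = k.toNat * c := by rw [hcast]; ring
  _ = ∑ _i ∈ Finset.range k.toNat, c := by rw [Finset.sum_const, Finset.card_range]; ring
  _ ≤ _ := Finset.sum_le_sum (fun i _ => hc _)

lemma birkhoff_le {f : Fin n → ℝ} {c : ℝ} (hc : ∀ i, c ≤ f i) (u : ℤ → Fin n)
    {k : ℤ} (hk : k ≤ 0) : birkhoff f u k ≤ c * k := by
  have h3 : k.toNat = 0 := by omega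
  rw [birkhoff, h3]
  simp only [Finset.range_zero, Finset.sum_empty, zero_sub, neg_le]
  have hcast : ((-k).toNat : ℝ) = ((-k : ℤ) : ℝ) := by
    exact_mod_cast congrArg (fun z : ℤ => (z : ℝ)) (Int.toNat_of_nonneg (by omega : (0:ℤ) ≤ -k))
  calc -(c * k) = (-k).toNat * c := by rw [hcast]; push_cast; ring
  _ = ∑ _i ∈ Finset.range (-k).toNat, c := by rw [Finset.sum_const, Finset.card_range]; ring
  _ ≤ _ := Finset.sum_le_sum (fun i _ => hc _)

lemma exists_idx {f : Fin n → ℝ} (hf : ∀ i, 0 < f i) [Nonempty (Fin n)]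
    (u : ℤ → Fin n) (x : ℝ) :
    ∃ k : ℤ, birkhoff f u k ≤ x ∧ x < birkhoff f u (k + 1) := by
  obtain ⟨i₀, -, hmin⟩ := Finset.exists_min_image Finset.univ f
    ⟨Classical.arbitrary _, Finset.mem_univ _⟩
  set c := f i₀ with hcdef
  have hc : 0 < c := hf i₀
  have hcle : ∀ i, c ≤ f i := fun i => hmin i (Finset.mem_univ i)
  have Hbdd : ∃ b : ℤ, ∀ z : ℤ, birkhoff f u z ≤ x → z ≤ b := by
    refine ⟨max 0 ⌈x / c⌉, fun z hz => ?_⟩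
    by_contra hzb
    push_neg at hzb
    have hz0 : 0 ≤ z := by omega
    have h1 : c * z ≤ x := le_trans (birkhoff_ge hcle u hz0) hz
    have h2 : (⌈x / c⌉ : ℝ) < z := by exact_mod_cast by omega
    have h3 : x / c ≤ (⌈x / c⌉ : ℝ) := Int.le_ceil _
    have : x / c < z := lt_of_le_of_lt h3 h2
    have := (div_lt_iff₀ hc).mp this
    linarith
  have Hinh : ∃ z : ℤ, birkhoff f u z ≤ x := by
    refine ⟨min 0 ⌊x / c⌋, ?_⟩
    have hz0 : (min 0 ⌊x / c⌋ : ℤ) ≤ 0 := by omega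
    refine le_trans (birkhoff_le hcle u hz0) ?_
    have h2 : ((min 0 ⌊x / c⌋ : ℤ) : ℝ) ≤ (⌊x / c⌋ : ℝ) := by exact_mod_cast by omega
    have h3 : ((⌊x / c⌋ : ℤ) : ℝ) ≤ x / c := Int.floor_le _
    have : ((min 0 ⌊x / c⌋ : ℤ) : ℝ) ≤ x / c := le_trans h2 h3
    calc c * ((min 0 ⌊x / c⌋ : ℤ) : ℝ) ≤ c * (x / c) := by
          exact mul_le_mul_of_nonneg_left this hc.le
    _ = x := by field_simp
  obtain ⟨k, hk, hmax⟩ := Int.exists_greatest_of_bdd (P := fun k => birkhoff f u k ≤ x) Hbdd Hinh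
  refine ⟨k, hk, ?_⟩
  by_contra h
  have := hmax (k + 1) (not_lt.mp h)
  omega

open Classical in
noncomputable def idx (f : Fin n → ℝ) (u : ℤ → Fin n) (x : ℝ) : ℤ :=
  if h : ∃ k : ℤ, birkhoff f u k ≤ x ∧ x < birkhoff f u (k + 1) then h.choose else 0

lemma idx_spec {f : Fin n → ℝ} (hf : ∀ i, 0 < f i) [Nonempty (Fin n)]
    (u : ℤ → Fin n) (x : ℝ) :
    birkhoff f u (idx f u x) ≤ x ∧ x < birkhoff f u (idx f u x + 1) := by
  rw [idx, dif_pos (exists_idx hf u x)]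
  exact (exists_idx hf u x).choose_spec

lemma idx_eq {f : Fin n → ℝ} (hf : ∀ i, 0 < f i) [Nonempty (Fin n)]
    {u : ℤ → Fin n} {x : ℝ} {k : ℤ}
    (h1 : birkhoff f u k ≤ x) (h2 : x < birkhoff f u (k + 1)) :
    idx f u x = k := by
  obtain ⟨s1, s2⟩ := idx_spec hf u x
  by_contra hne
  rcases lt_or_gt_of_ne hne with h | h
  · have : birkhoff f u (idx f u x + 1) ≤ birkhoff f u k := birkhoff_mono hf u (by omega)
    linarith
  · have : birkhoff f u (k + 1) ≤ birkhoff f u (idx f u x) := birkhoff_mono hf u (by omega)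
    linarith

lemma birkhoff_congr (f : Fin n → ℝ) {u v : ℤ → Fin n} (m : ℤ)
    (h : ∀ i : ℤ, min m 0 ≤ i → i < max m 0 → u i = v i) :
    birkhoff f u m = birkhoff f v m := by
  unfold birkhoff
  congr 1
  · apply Finset.sum_congr rfl
    intro i hi
    rw [Finset.mem_range] at hi
    rw [h (i : ℤ) (by omega) (by omega)]
  · apply Finset.sum_congr rfl
    intro i hi
    rw [Finset.mem_range] at hi
    rw [h (-((i : ℤ) + 1)) (by omega) (by omega)]


noncomputable def phi (f g : Fin n → ℝ) (u : ℤ → Fin n) (x : ℝ) : ℝ :=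
  birkhoff g u (idx f u x) +
    (x - birkhoff f u (idx f u x)) * (g (u (idx f u x)) / f (u (idx f u x)))

lemma shiftZ_apply (k : ℤ) (u : ℤ → Fin n) (i : ℤ) : shiftZ k u i = u (i + k) := rfl

lemma phi_equivariant {f : Fin n → ℝ} (hf : ∀ i, 0 < f i) [Nonempty (Fin n)]
    (g : Fin n → ℝ) (u : ℤ → Fin n) (x : ℝ) (k : ℤ) :
    phi f g (shiftZ k u) (x - birkhoff f u k) = phi f g u x - birkhoff g u k := by
  set j := idx f u x with hj
  obtain ⟨s1, s2⟩ := idx_spec hf u x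
  have hidx : idx f (shiftZ k u) (x - birkhoff f u k) = j - k := by
    apply idx_eq hf
    · rw [birkhoff_shift]
      have : k + (j - k) = j := by ring
      rw [this]; linarith
    · rw [birkhoff_shift]
      have : k + (j - k + 1) = j + 1 := by ring
      rw [this]; linarith
  rw [phi, hidx, birkhoff_shift, birkhoff_shift, shiftZ_apply]
  have e1 : k + (j - k) = j := by ring
  have e2 : j - k + k = j := by ring
  rw [e1, e2, phi, ← hj]
  ring

lemma phi_inverse {f g : Fin n → ℝ} (hf : ∀ i, 0 < f i) (hg : ∀ i, 0 < g i)
    [Nonempty (Fin n)] (u : ℤ → Fin n) (x : ℝ) :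
    phi g f u (phi f g u x) = x := by
  set j := idx f u x with hj
  obtain ⟨s1, s2⟩ := idx_spec hf u x
  have hfj : 0 < f (u j) := hf _
  have hgj : 0 < g (u j) := hg _
  have hsucc := birkhoff_succ f u j
  have hsuccg := birkhoff_succ g u j
  have hidx : idx g u (phi f g u x) = j := by
    apply idx_eq hg
    · rw [phi, ← hj]
      have : 0 ≤ (x - birkhoff f u j) * (g (u j) / f (u j)) := by
        apply mul_nonneg (by linarith) (le_of_lt (div_pos hgj hfj))
      linarith
    · rw [phi, ← hj, hsuccg]
      have hlt : x - birkhoff f u j < f (u j) := by linarith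
      have : (x - birkhoff f u j) * (g (u j) / f (u j)) < g (u j) := by
        rw [div_eq_mul_inv]
        calc (x - birkhoff f u j) * (g (u j) * (f (u j))⁻¹)
            < f (u j) * (g (u j) * (f (u j))⁻¹) := by
              apply mul_lt_mul_of_pos_right hlt
              positivity
        _ = g (u j) := by field_simp
      linarith
  rw [phi, hidx, phi, ← hj]
  field_simp
  ring


lemma phi_est {f g : Fin n → ℝ} (hf : ∀ i, 0 < f i) (hg : ∀ i, 0 < g i)
    [Nonempty (Fin n)] (u₀ : ℤ → Fin n) (x₀ : ℝ) (u' : ℤ → Fin n) (x' : ℝ)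
    (hu : ∀ i : ℤ, min (idx f u₀ x₀ - 1) 0 ≤ i → i ≤ max (idx f u₀ x₀) 0 → u' i = u₀ i)
    (hx1 : birkhoff f u₀ (idx f u₀ x₀ - 1) < x')
    (hx2 : x' < birkhoff f u₀ (idx f u₀ x₀ + 1)) :
    |phi f g u' x' - phi f g u₀ x₀| ≤
      max (g (u₀ (idx f u₀ x₀ - 1)) / f (u₀ (idx f u₀ x₀ - 1)))
          (g (u₀ (idx f u₀ x₀)) / f (u₀ (idx f u₀ x₀))) * |x' - x₀| := by
  set j := idx f u₀ x₀ with hj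
  obtain ⟨s1, s2⟩ := idx_spec hf u₀ x₀
  rw [← hj] at s1 s2
  have hBf : ∀ m : ℤ, j - 1 ≤ m → m ≤ j + 1 → birkhoff f u' m = birkhoff f u₀ m := by
    intro m hm1 hm2
    apply birkhoff_congr
    intro i h1 h2
    apply hu <;> omega
  have hBg : ∀ m : ℤ, j - 1 ≤ m → m ≤ j + 1 → birkhoff g u' m = birkhoff g u₀ m := by
    intro m hm1 hm2
    apply birkhoff_congr
    intro i h1 h2
    apply hu <;> omega
  have huj : u' j = u₀ j := hu j (by omega) (by omega)
  have huj1 : u' (j - 1) = u₀ (j - 1) := hu (j - 1) (by omega) (by omega)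
  set r1 := g (u₀ (j - 1)) / f (u₀ (j - 1)) with hr1def
  set rj := g (u₀ j) / f (u₀ j) with hrjdef
  set M := max r1 rj with hM
  have hr1 : 0 ≤ r1 := le_of_lt (div_pos (hg _) (hf _))
  have hrj : 0 ≤ rj := le_of_lt (div_pos (hg _) (hf _))
  have hr1M : r1 ≤ M := le_max_left _ _
  have hrjM : rj ≤ M := le_max_right _ _
  have hphi₀ : phi f g u₀ x₀ = birkhoff g u₀ j + (x₀ - birkhoff f u₀ j) * rj := by
    rw [phi, ← hj]
  rcases le_or_gt (birkhoff f u₀ j) x' with hcase | hcase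
  · -- x' in tile j
    have hidx' : idx f u' x' = j := by
      apply idx_eq hf
      · rw [hBf j (by omega) (by omega)]; exact hcase
      · rw [hBf (j + 1) (by omega) (by omega)]; exact hx2
    have hphi' : phi f g u' x' = birkhoff g u₀ j + (x' - birkhoff f u₀ j) * rj := by
      rw [phi, hidx', hBf j (by omega) (by omega), hBg j (by omega) (by omega), huj]
    rw [hphi', hphi₀]
    have e : birkhoff g u₀ j + (x' - birkhoff f u₀ j) * rj -
        (birkhoff g u₀ j + (x₀ - birkhoff f u₀ j) * rj) = (x' - x₀) * rj := by ring
    rw [e, abs_mul, abs_of_nonneg hrj, mul_comm]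
    exact mul_le_mul_of_nonneg_right hrjM (abs_nonneg _)
  · -- x' in tile j - 1
    have hidx' : idx f u' x' = j - 1 := by
      apply idx_eq hf
      · rw [hBf (j - 1) (by omega) (by omega)]; exact hx1.le
      · have e : j - 1 + 1 = j := by ring
        rw [e, hBf j (by omega) (by omega)]; exact hcase
    have hphi' : phi f g u' x' =
        birkhoff g u₀ (j - 1) + (x' - birkhoff f u₀ (j - 1)) * r1 := by
      rw [phi, hidx', hBf (j - 1) (by omega) (by omega),
        hBg (j - 1) (by omega) (by omega), huj1]
    have hsf := birkhoff_succ f u₀ (j - 1)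
    have hsg := birkhoff_succ g u₀ (j - 1)
    have e : j - 1 + 1 = j := by ring
    rw [e] at hsf hsg
    have hfne : f (u₀ (j - 1)) ≠ 0 := ne_of_gt (hf _)
    have hfr : f (u₀ (j - 1)) * r1 = g (u₀ (j - 1)) := by
      rw [hr1def]; field_simp
    have hE : phi f g u' x' - phi f g u₀ x₀ =
        -((birkhoff f u₀ j - x') * r1 + (x₀ - birkhoff f u₀ j) * rj) := by
      rw [hphi', hphi₀, hsf, hsg]
      linear_combination hfr
    have hxlt : x' < x₀ := lt_of_lt_of_le hcase s1
    have habs : |x' - x₀| = x₀ - x' := by rw [abs_of_neg (by linarith)]; ring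
    have p1 : (birkhoff f u₀ j - x') * r1 ≤ (birkhoff f u₀ j - x') * M :=
      mul_le_mul_of_nonneg_left hr1M (by linarith)
    have p2 : (x₀ - birkhoff f u₀ j) * rj ≤ (x₀ - birkhoff f u₀ j) * M :=
      mul_le_mul_of_nonneg_left hrjM (by linarith)
    have q1 : 0 ≤ (birkhoff f u₀ j - x') * r1 := mul_nonneg (by linarith) hr1
    have q2 : 0 ≤ (x₀ - birkhoff f u₀ j) * rj := mul_nonneg (by linarith) hrj
    rw [hE, habs, abs_neg, abs_of_nonneg (by linarith)]
    nlinarith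


lemma phi_continuous {f g : Fin n → ℝ} (hf : ∀ i, 0 < f i) (hg : ∀ i, 0 < g i)
    [Nonempty (Fin n)] :
    Continuous fun p : (ℤ → Fin n) × ℝ => phi f g p.1 p.2 := by
  rw [continuous_iff_continuousAt]
  rintro ⟨u₀, x₀⟩
  obtain ⟨s1, s2⟩ := idx_spec hf u₀ x₀
  set j := idx f u₀ x₀ with hj
  set M := max (g (u₀ (j - 1)) / f (u₀ (j - 1))) (g (u₀ j) / f (u₀ j)) with hM
  have hMpos : 0 < M := lt_of_lt_of_le (div_pos (hg _) (hf _)) (le_max_right _ _)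
  have hlt1 : birkhoff f u₀ (j - 1) < x₀ :=
    lt_of_lt_of_le (birkhoff_lt hf u₀ (by omega)) s1
  rw [ContinuousAt, Metric.tendsto_nhds]
  intro ε hε
  have hUopen : IsOpen {u' : ℤ → Fin n |
      ∀ i ∈ Finset.Icc (min (j - 1) 0) (max j 0), u' i = u₀ i} := by
    have heq : {u' : ℤ → Fin n | ∀ i ∈ Finset.Icc (min (j - 1) 0) (max j 0), u' i = u₀ i}
        = ⋂ i ∈ Finset.Icc (min (j - 1) 0) (max j 0), (fun u' : ℤ → Fin n => u' i) ⁻¹' {u₀ i} := by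
      ext u'; simp [Set.mem_iInter]
    rw [heq]
    exact isOpen_biInter_finset fun i _ =>
      (continuous_apply i).isOpen_preimage _ (isOpen_discrete _)
  have hU : {u' : ℤ → Fin n | ∀ i ∈ Finset.Icc (min (j - 1) 0) (max j 0), u' i = u₀ i}
      ∈ 𝓝 u₀ := hUopen.mem_nhds (fun i _ => rfl)
  have hJ : Set.Ioo (birkhoff f u₀ (j - 1)) (birkhoff f u₀ (j + 1)) ∩
      Metric.ball x₀ (ε / M) ∈ 𝓝 x₀ :=
    Filter.inter_mem (Ioo_mem_nhds hlt1 s2) (Metric.ball_mem_nhds _ (div_pos hε hMpos))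
  filter_upwards [prod_mem_nhds hU hJ] with p hp
  obtain ⟨hpu, hpx⟩ := hp
  have hest := phi_est hf hg u₀ x₀ p.1 p.2
    (fun i h1 h2 => hpu i (Finset.mem_Icc.mpr ⟨h1, h2⟩)) hpx.1.1 hpx.1.2
  have hb : |p.2 - x₀| < ε / M := by
    have := hpx.2
    rwa [Metric.mem_ball, Real.dist_eq] at this
  rw [Real.dist_eq]
  calc |phi f g p.1 p.2 - phi f g u₀ x₀| ≤ M * |p.2 - x₀| := hest
  _ < M * (ε / M) := by exact mul_lt_mul_of_pos_left hb hMpos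
  _ = ε := by field_simp


set_option maxHeartbeats 1000000 in
/-- For any subshift `S` (nonempty, closed, shift-invariant subset of `A^ℤ`)
and any two positive length functions `f, g`, the tiling spaces `T_f` and `T_g`
are homeomorphic. -/
theorem statement0 (n : ℕ) (S : Set (ℤ → Fin n))
    (hne : S.Nonempty) (hclosed : IsClosed S)
    (hinv : ∀ u : ℤ → Fin n, u ∈ S ↔ shift u ∈ S)
    (f g : Fin n → ℝ) (hf : ∀ i, 0 < f i) (hg : ∀ i, 0 < g i) :
    Nonempty (TilingSpace S f ≃ₜ TilingSpace S g) := by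
  obtain ⟨u₀, hu₀⟩ := hne
  haveI : Nonempty (Fin n) := ⟨u₀ 0⟩
  have hΦrel : ∀ p q : S × ℝ, tilingRel S f p q →
      tilingRel S g (p.1, phi f g (p.1 : ℤ → Fin n) p.2)
        (q.1, phi f g (q.1 : ℤ → Fin n) q.2) := by
    rintro ⟨u, x⟩ ⟨v, y⟩ ⟨k, h1, h2⟩
    refine ⟨k, h1, ?_⟩
    dsimp at h1 h2 ⊢
    rw [h2, h1]
    exact phi_equivariant hf g _ x k
  have hΨrel : ∀ p q : S × ℝ, tilingRel S g p q →
      tilingRel S f (p.1, phi g f (p.1 : ℤ → Fin n) p.2)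
        (q.1, phi g f (q.1 : ℤ → Fin n) q.2) := by
    rintro ⟨u, x⟩ ⟨v, y⟩ ⟨k, h1, h2⟩
    refine ⟨k, h1, ?_⟩
    dsimp at h1 h2 ⊢
    rw [h2, h1]
    exact phi_equivariant hg f _ x k
  let F : TilingSpace S f → TilingSpace S g :=
    Quot.lift (fun p : S × ℝ =>
        Quot.mk (tilingRel S g) (p.1, phi f g (p.1 : ℤ → Fin n) p.2))
      (fun p q hpq => Quot.sound (hΦrel p q hpq))
  let G : TilingSpace S g → TilingSpace S f :=
    Quot.lift (fun p : S × ℝ =>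
        Quot.mk (tilingRel S f) (p.1, phi g f (p.1 : ℤ → Fin n) p.2))
      (fun p q hpq => Quot.sound (hΨrel p q hpq))
  have h1 : Continuous (fun p : S × ℝ => ((p.1 : ℤ → Fin n), p.2)) :=
    (continuous_subtype_val.comp continuous_fst).prodMk continuous_snd
  have hcont1 : Continuous (fun p : S × ℝ => ((p.1 : S), phi f g (p.1 : ℤ → Fin n) p.2)) := by
    have h2 := Continuous.comp (phi_continuous hf hg) h1
    exact continuous_fst.prodMk h2
  have hcont2 : Continuous (fun p : S × ℝ => ((p.1 : S), phi g f (p.1 : ℤ → Fin n) p.2)) := by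
    have h2 := Continuous.comp (phi_continuous hg hf) h1
    exact continuous_fst.prodMk h2
  have hFcont : Continuous F :=
    continuous_quot_lift _ (continuous_quot_mk.comp hcont1)
  have hGcont : Continuous G :=
    continuous_quot_lift _ (continuous_quot_mk.comp hcont2)
  have hGF : ∀ z : TilingSpace S f, G (F z) = z := by
    apply Quot.ind
    rintro ⟨⟨u, hu⟩, x⟩
    have key : F (Quot.mk (tilingRel S f) (⟨u, hu⟩, x))
        = Quot.mk (tilingRel S g) ((⟨u, hu⟩ : S), phi f g u x) := rfl
    have key2 : G (Quot.mk (tilingRel S g) ((⟨u, hu⟩ : S), phi f g u x))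
        = Quot.mk (tilingRel S f) ((⟨u, hu⟩ : S), phi g f u (phi f g u x)) := rfl
    rw [key, key2, phi_inverse hf hg u x]
  have hFG : ∀ z : TilingSpace S g, F (G z) = z := by
    apply Quot.ind
    rintro ⟨⟨u, hu⟩, x⟩
    have key : G (Quot.mk (tilingRel S g) (⟨u, hu⟩, x))
        = Quot.mk (tilingRel S f) ((⟨u, hu⟩ : S), phi g f u x) := rfl
    have key2 : F (Quot.mk (tilingRel S f) ((⟨u, hu⟩ : S), phi g f u x))
        = Quot.mk (tilingRel S g) ((⟨u, hu⟩ : S), phi f g u (phi g f u x)) := rfl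
    rw [key, key2, phi_inverse hg hf u x]
  exact ⟨⟨⟨F, G, hGF, hFG⟩, hFcont, hGcont⟩⟩


end Tilings
end

section
/- Let a_0, …, a_{n−1} be integers such that every complex root of the polynomial p(λ) = λ^n + a_{n−1}λ^{n−1} + ⋯ + a_0 has modulus at least 1. Let t : ℕ → ℝ satisfy the recurrence t_{m+n} = −(a_{n−1}t_{m+n−1} + ⋯ + a_0 t_m) for all m, and suppose the distance from t_m to the nearest integer tends to 0 as m → ∞. Then there exists N such that t_m is an integer for all m ≥ N. -/
open Filter Topology

open Polynomial in
lemma key_lemma : ∀ (d : ℕ) (q : Polynomial ℂ), q.natDegree = d → q ≠ 0 →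
    (∀ z, q.IsRoot z → 1 ≤ ‖z‖) →
    ∀ (e : ℕ → ℂ), Tendsto e atTop (𝓝 0) →
    (∀ m, ∑ i ∈ Finset.range (d + 1), q.coeff i * e (m + i) = 0) →
    ∀ m, e m = 0 := by
  intro d
  induction d with
  | zero =>
    intro q hd hq _ e _ hrec m
    have h : q.coeff 0 * e m = 0 := by simpa using hrec m
    have hc : q.coeff 0 ≠ 0 := by
      have : q.coeff 0 = q.leadingCoeff := by rw [Polynomial.leadingCoeff, hd]
      rw [this]
      exact Polynomial.leadingCoeff_ne_zero.mpr hq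
    exact (mul_eq_zero.mp h).resolve_left hc
  | succ d ih =>
    intro q hd hq hroots e he hrec m
    -- q has a root
    have hdegpos : 0 < q.degree := by
      rw [← Polynomial.natDegree_pos_iff_degree_pos, hd]; omega
    obtain ⟨lam, hlam⟩ := Complex.exists_root hdegpos
    set r := q /ₘ (X - C lam) with hr
    have hfac : (X - C lam) * r = q := (Polynomial.mul_divByMonic_eq_iff_isRoot).mpr hlam
    have hr0 : r ≠ 0 := by
      intro h0; apply hq; rw [← hfac, h0, mul_zero]
    have hXl : (X - C lam : Polynomial ℂ) ≠ 0 := Polynomial.X_sub_C_ne_zero lam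
    have hrdeg : r.natDegree = d := by
      have := Polynomial.natDegree_mul hXl hr0
      rw [hfac, hd, Polynomial.natDegree_X_sub_C] at this
      omega
    have hrroots : ∀ z, r.IsRoot z → 1 ≤ ‖z‖ := by
      intro z hz
      apply hroots
      rw [Polynomial.IsRoot, ← hfac, Polynomial.eval_mul, hz.eq_zero, mul_zero]
    set u : ℕ → ℂ := fun m => ∑ i ∈ Finset.range (d + 1), r.coeff i * e (m + i) with hu
    have hustep : ∀ m, u (m + 1) = lam * u m := by
      intro m
      have h := hrec m
      have hco : ∀ i, q.coeff i = (r * X).coeff i - lam * r.coeff i := by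
        intro i
        rw [← hfac]
        rw [sub_mul, mul_comm (X : Polynomial ℂ) r]
        simp [Polynomial.coeff_sub, Polynomial.coeff_C_mul]
      simp only [hco, sub_mul, Finset.sum_sub_distrib] at h
      have h1 : ∑ i ∈ Finset.range (d + 1 + 1), (r * X).coeff i * e (m + i) = u (m + 1) := by
        rw [Finset.sum_range_succ']
        simp only [Polynomial.coeff_mul_X, Polynomial.coeff_mul_X_zero, zero_mul, add_zero]
        apply Finset.sum_congr rfl
        intro i _
        have hi : m + (i + 1) = m + 1 + i := by omega
        rw [hi]
      have h2 : ∑ i ∈ Finset.range (d + 1 + 1), lam * r.coeff i * e (m + i) = lam * u m := by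
        rw [Finset.sum_range_succ]
        have : r.coeff (d + 1) = 0 :=
          Polynomial.coeff_eq_zero_of_natDegree_lt (by omega)
        rw [this, mul_zero, zero_mul, add_zero, hu, Finset.mul_sum]
        apply Finset.sum_congr rfl
        intro i _
        ring
      rw [h1, h2] at h
      linear_combination h
    have hutend : Tendsto u atTop (𝓝 0) := by
      have : Tendsto u atTop (𝓝 (∑ i ∈ Finset.range (d + 1), r.coeff i * 0)) := by
        apply tendsto_finset_sum
        intro i _
        exact (he.comp (tendsto_add_atTop_nat i)).const_mul _
      simpa using this
    have hupow : ∀ m, u m = lam ^ m * u 0 := by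
      intro m
      induction m with
      | zero => simp
      | succ k ihk => rw [hustep, ihk, pow_succ]; ring
    have hlam1 : 1 ≤ ‖lam‖ := hroots lam hlam
    have hu0 : u 0 = 0 := by
      have hle : ∀ m, ‖u 0‖ ≤ ‖u m‖ := by
        intro m
        rw [hupow m, norm_mul, norm_pow]
        nlinarith [one_le_pow₀ hlam1 (n := m), norm_nonneg (u 0),
          pow_nonneg (norm_nonneg lam) m]
      have habs : Tendsto (fun m => ‖u m‖) atTop (𝓝 0) := by
        have := (continuous_norm.tendsto 0).comp hutend
        simp only [norm_zero] at this
        exact this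
      have : ‖u 0‖ ≤ 0 := ge_of_tendsto' habs hle
      simpa using le_antisymm this (norm_nonneg _)
    have huzero : ∀ m, u m = 0 := by
      intro m; rw [hupow, hu0, mul_zero]
    exact ih r hrdeg hr0 hrroots e he (fun m => huzero m) m

/-- if all complex roots of `p(λ) = λ^n + a_{n-1}λ^{n-1} + ⋯ + a₀`
(with integer coefficients) have modulus at least `1`, and the real sequence `t`
satisfies the recurrence `t_{m+n} = −(a_{n-1}t_{m+n-1} + ⋯ + a₀ t_m)` with the
distance from `t_m` to the nearest integer tending to `0`, then `t_m` is an
integer for all sufficiently large `m`. -/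
theorem statement15 (n : ℕ) (a : Fin n → ℤ)
    (hroots : ∀ z : ℂ, (z ^ n + ∑ i : Fin n, (a i : ℂ) * z ^ (i : ℕ)) = 0 →
      1 ≤ ‖z‖)
    (t : ℕ → ℝ)
    (hrec : ∀ m : ℕ, t (m + n) = -∑ i : Fin n, (a i : ℝ) * t (m + i))
    (hconv : Tendsto (fun m : ℕ => |t m - round (t m)|) atTop (𝓝 0)) :
    ∃ N : ℕ, ∀ m : ℕ, N ≤ m → ∃ j : ℤ, t m = (j : ℝ) := by
  rcases Nat.eq_zero_or_pos n with hn | hn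
  · subst hn
    refine ⟨0, fun m _ => ⟨0, ?_⟩⟩
    simpa using hrec m
  -- the fractional part sequence
  set g : ℕ → ℝ := fun m => t m - round (t m) with hg
  have hg0 : Tendsto g atTop (𝓝 0) :=
    squeeze_zero_norm (fun m => le_of_eq (Real.norm_eq_abs _)) hconv
  have hgj : ∀ j : ℕ, Tendsto (fun m => g (m + j)) atTop (𝓝 0) :=
    fun j => hg0.comp (tendsto_add_atTop_nat j)
  -- the integer sequence K
  set K : ℕ → ℤ := fun m => round (t (m + n)) + ∑ i : Fin n, a i * round (t (m + i)) with hKdef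
  have hK : ∀ m, ((K m : ℝ)) = -(g (m + n) + ∑ i : Fin n, (a i : ℝ) * g (m + i)) := by
    intro m
    have h := hrec m
    simp only [hKdef, hg, mul_sub, Finset.sum_sub_distrib]
    push_cast
    rw [h]
    ring
  have hKtend : Tendsto (fun m => ((K m : ℝ))) atTop (𝓝 0) := by
    have h1 : Tendsto (fun m => g (m + n) + ∑ i : Fin n, (a i : ℝ) * g (m + i)) atTop
        (𝓝 (0 + ∑ i : Fin n, (a i : ℝ) * 0)) :=
      (hgj n).add (tendsto_finset_sum _ (fun i _ => ((hgj i).const_mul _)))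
    simp only [mul_zero, Finset.sum_const_zero, add_zero] at h1
    simp only [hK]
    simpa using h1.neg
  have hev : ∀ᶠ m in atTop, g (m + n) + ∑ i : Fin n, (a i : ℝ) * g (m + i) = 0 := by
    have h1 : ∀ᶠ m in atTop, |((K m : ℝ))| < 1 := by
      have h0 : Tendsto (fun m => |((K m : ℝ))|) atTop (𝓝 |(0:ℝ)|) := hKtend.abs
      rw [abs_zero] at h0
      exact h0.eventually_lt_const one_pos
    filter_upwards [h1] with m hm
    have hK0 : K m = 0 := by
      have h3 : |K m| < 1 := by exact_mod_cast hm
      rw [abs_lt] at h3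
      omega
    have := hK m
    rw [hK0] at this
    push_cast at this
    linarith
  rw [eventually_atTop] at hev
  obtain ⟨N, hN⟩ := hev
  -- transfer to ℂ and apply key_lemma
  set a' : ℕ → ℤ := fun i => if h : i < n then a ⟨i, h⟩ else 0 with ha'
  set q : Polynomial ℂ := Polynomial.X ^ n + ∑ i ∈ Finset.range n,
    Polynomial.C ((a' i : ℂ)) * Polynomial.X ^ i with hqdef
  have hdegsum : (∑ i ∈ Finset.range n, Polynomial.C ((a' i : ℂ)) * Polynomial.X ^ i).degree < (n : WithBot ℕ) := by
    apply lt_of_le_of_lt (Polynomial.degree_sum_le _ _)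
    rw [Finset.sup_lt_iff (by exact_mod_cast WithBot.bot_lt_coe n)]
    intro i hi
    apply lt_of_le_of_lt (Polynomial.degree_C_mul_X_pow_le _ _)
    exact_mod_cast Finset.mem_range.mp hi
  have hqmonic : q.Monic := Polynomial.monic_X_pow_add hdegsum
  have hq0 : q ≠ 0 := hqmonic.ne_zero
  have hqdeg : q.degree = n := by
    rw [hqdef]
    rw [Polynomial.degree_add_eq_left_of_degree_lt (by rwa [Polynomial.degree_X_pow])]
    exact Polynomial.degree_X_pow n
  have hqnatdeg : q.natDegree = n := Polynomial.natDegree_eq_of_degree_eq_some hqdeg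
  have hqcoeff_lt : ∀ i, i < n → q.coeff i = (a' i : ℂ) := by
    intro i hi
    rw [hqdef]
    rw [Polynomial.coeff_add, Polynomial.coeff_X_pow, if_neg (by omega)]
    rw [Polynomial.finset_sum_coeff]
    simp only [Polynomial.coeff_C_mul, Polynomial.coeff_X_pow]
    rw [Finset.sum_eq_single i]
    · simp
    · intro b _ hb; simp [Ne.symm hb]
    · intro h; exact absurd (Finset.mem_range.mpr hi) h
  have hqcoeff_n : q.coeff n = 1 := by
    have := hqmonic
    rwa [Polynomial.Monic, Polynomial.leadingCoeff, hqnatdeg] at this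
  have hqroots : ∀ z, q.IsRoot z → 1 ≤ ‖z‖ := by
    intro z hz
    apply hroots
    rw [Polynomial.IsRoot, hqdef] at hz
    simp only [Polynomial.eval_add, Polynomial.eval_pow, Polynomial.eval_X,
      Polynomial.eval_finset_sum, Polynomial.eval_mul, Polynomial.eval_C] at hz
    rw [← hz]
    congr 1
    rw [← Fin.sum_univ_eq_sum_range (fun i => ((a' i : ℂ)) * z ^ i) n]
    apply Finset.sum_congr rfl
    intro i _
    simp [ha', i.isLt]
  set e : ℕ → ℂ := fun m => ((g (m + N) : ℝ) : ℂ) with he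
  have hetend : Tendsto e atTop (𝓝 0) := by
    have := (Complex.continuous_ofReal.tendsto 0).comp (hg0.comp (tendsto_add_atTop_nat N))
    simp only [Complex.ofReal_zero] at this
    exact this
  have herec : ∀ m, ∑ i ∈ Finset.range (n + 1), q.coeff i * e (m + i) = 0 := by
    intro m
    rw [Finset.sum_range_succ, hqcoeff_n, one_mul]
    have hsum : ∑ i ∈ Finset.range n, q.coeff i * e (m + i)
        = ∑ i : Fin n, ((a i : ℂ)) * e (m + i) := by
      rw [← Fin.sum_univ_eq_sum_range (fun i => q.coeff i * e (m + i)) n]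
      apply Finset.sum_congr rfl
      intro i _
      rw [hqcoeff_lt i i.isLt]
      simp [ha', i.isLt]
    rw [hsum]
    have hz2 : g (m + N + n) + ∑ i : Fin n, (a i : ℝ) * g (m + N + i) = 0 :=
      hN (m + N) (by omega)
    have hz3 : g (m + n + N) + ∑ i : Fin n, (a i : ℝ) * g (m + i + N) = 0 := by
      have hs : ∑ i : Fin n, (a i : ℝ) * g (m + i + N) = ∑ i : Fin n, (a i : ℝ) * g (m + N + i) :=
        Finset.sum_congr rfl (fun i _ => by rw [show m + (i : ℕ) + N = m + N + i from by omega])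
      rw [hs, show m + n + N = m + N + n from by omega]
      exact hz2
    show ∑ i : Fin n, ((a i : ℂ)) * ((g (m + i + N) : ℝ) : ℂ) + ((g (m + n + N) : ℝ) : ℂ) = 0
    have hcast := congrArg (fun x : ℝ => (x : ℂ)) hz3
    simp only [Complex.ofReal_add, Complex.ofReal_sum, Complex.ofReal_mul,
      Complex.ofReal_intCast, Complex.ofReal_zero] at hcast
    rw [add_comm]
    exact hcast
  have hezero : ∀ m, e m = 0 := by
    apply key_lemma n q hqnatdeg hq0 hqroots e hetend
    exact herec
  refine ⟨N, fun m hm => ⟨round (t m), ?_⟩⟩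
  have h5 : ((g (m - N + N) : ℝ) : ℂ) = 0 := hezero (m - N)
  rw [show m - N + N = m from by omega] at h5
  have h6 : g m = 0 := by exact_mod_cast h5
  have h7 : t m - round (t m) = 0 := h6
  linarith
end

section
/- Let a_0, …, a_{n−1} be integers such that every complex root of the polynomial p(λ) = λ^n + a_{n−1}λ^{n−1} + ⋯ + a_0 has modulus at least 1. If t : ℕ → ℝ satisfies t_{m+n} = −(a_{n−1}t_{m+n−1} + ⋯ + a_0 t_m) for all m and t_m → 0 as m → ∞, then t_m = 0 for all m. -/
open Filter Topology Polynomial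

private lemma key16 : ∀ (n : ℕ) (p : Polynomial ℂ), p.Monic → p.natDegree = n →
    (∀ z, p.eval z = 0 → 1 ≤ ‖z‖) →
    ∀ t : ℕ → ℂ, (∀ m, ∑ k ∈ Finset.range (n+1), p.coeff k * t (m+k) = 0) →
    Tendsto t atTop (𝓝 0) → ∀ m, t m = 0 := by
  intro n
  induction n with
  | zero =>
    intro p hm hd _ t hrec _ m
    have h := hrec m
    have hp1 : p = 1 := hm.natDegree_eq_zero.mp hd
    simpa [hp1] using h
  | succ n ih =>
    intro p hm hd hroots t hrec htend
    have hdeg : 0 < p.degree := natDegree_pos_iff_degree_pos.mp (by omega)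
    obtain ⟨z, hz⟩ := Complex.exists_root hdeg
    have hz1 : 1 ≤ ‖z‖ := hroots z hz
    obtain ⟨q, hq⟩ := dvd_iff_isRoot.mpr hz
    have hqm : q.Monic := (monic_X_sub_C z).of_mul_monic_left (hq ▸ hm)
    have hqd : q.natDegree = n := by
      have := hm.ne_zero
      have h1 : p.natDegree = (X - C z).natDegree + q.natDegree :=
        hq ▸ natDegree_mul (X_sub_C_ne_zero z) (fun h0 => by simp [h0, hq] at this)
      rw [natDegree_X_sub_C] at h1
      omega
    have hqroots : ∀ w, q.eval w = 0 → 1 ≤ ‖w‖ := by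
      intro w hw
      exact hroots w (by rw [hq, eval_mul, hw, mul_zero])
    set u : ℕ → ℂ := fun m => ∑ k ∈ Finset.range (n+1), q.coeff k * t (m+k) with hu_def
    have hq' : p = X * q - C z * q := by rw [hq]; ring
    have hu : ∀ m, u (m+1) = z * u m := by
      intro m
      have h := hrec m
      have h0 : ∀ k, p.coeff k = (X * q).coeff k - z * q.coeff k := by
        intro k; rw [hq']; simp
      simp only [h0, sub_mul, Finset.sum_sub_distrib] at h
      have e1 : ∑ k ∈ Finset.range (n+1+1), (X * q).coeff k * t (m+k) = u (m+1) := by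
        rw [Finset.sum_range_succ']
        simp only [coeff_X_mul, mul_coeff_zero, coeff_X_zero, zero_mul, add_zero]
        exact Finset.sum_congr rfl fun k _ => by rw [show m + (k+1) = m+1+k by omega]
      have e2 : ∑ k ∈ Finset.range (n+1+1), z * q.coeff k * t (m+k) = z * u m := by
        rw [Finset.sum_range_succ, coeff_eq_zero_of_natDegree_lt (by omega), Finset.mul_sum]
        simp [mul_assoc]
      rw [e1, e2, sub_eq_zero] at h
      exact h
    have hgeom : ∀ m, u m = z ^ m * u 0 := by
      intro m
      induction m with
      | zero => simp
      | succ m ihm => rw [hu m, ihm, pow_succ]; ring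
    have hu0 : Tendsto u atTop (𝓝 0) := by
      have h1 : ∀ k : ℕ, Tendsto (fun m => q.coeff k * t (m + k)) atTop (𝓝 0) := by
        intro k
        simpa using (htend.comp (tendsto_add_atTop_nat k)).const_mul (q.coeff k)
      simpa using tendsto_finset_sum (Finset.range (n+1)) (fun k _ => h1 k)
    have huz : u 0 = 0 := by
      have habs : Tendsto (fun m => ‖u m‖) atTop (𝓝 0) := by
        simpa using hu0.norm
      have hle : ‖u 0‖ ≤ 0 := by
        refine ge_of_tendsto habs (Eventually.of_forall fun m => ?_)
        rw [hgeom m, norm_mul, norm_pow]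
        exact le_mul_of_one_le_left (norm_nonneg _) (one_le_pow₀ hz1)
      exact norm_eq_zero.mp (le_antisymm hle (norm_nonneg _))
    have hall : ∀ m, u m = 0 := fun m => by rw [hgeom m, huz, mul_zero]
    exact ih q hqm hqd hqroots t hall htend

/-- if all complex roots of `p(λ) = λ^n + a_{n-1}λ^{n-1} + ⋯ + a₀`
(with integer coefficients) have modulus at least `1`, and the real sequence `t`
satisfies the recurrence `t_{m+n} = −(a_{n-1}t_{m+n-1} + ⋯ + a₀ t_m)` with
`t_m → 0`, then `t` is identically zero. -/
theorem statement16 (n : ℕ) (a : Fin n → ℤ)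
    (hroots : ∀ z : ℂ, (z ^ n + ∑ i : Fin n, (a i : ℂ) * z ^ (i : ℕ)) = 0 →
      1 ≤ ‖z‖)
    (t : ℕ → ℝ)
    (hrec : ∀ m : ℕ, t (m + n) = -∑ i : Fin n, (a i : ℝ) * t (m + i))
    (hconv : Tendsto t atTop (𝓝 0)) :
    ∀ m : ℕ, t m = 0 := by
  rcases Nat.eq_zero_or_pos n with hn | hn
  · subst hn
    intro m
    simpa using hrec m
  set p : Polynomial ℂ := X ^ n + ∑ i : Fin n, C (a i : ℂ) * X ^ (i : ℕ) with hp_def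
  have hsumdeg : (∑ i : Fin n, C (a i : ℂ) * X ^ (i : ℕ)).degree < (n : WithBot ℕ) := by
    refine lt_of_le_of_lt (degree_sum_le _ _) ?_
    rw [Finset.sup_lt_iff (by exact_mod_cast WithBot.bot_lt_coe n)]
    intro i _
    exact lt_of_le_of_lt (degree_C_mul_X_pow_le _ _) (by exact_mod_cast i.isLt)
  have hm : p.Monic := monic_X_pow_add hsumdeg
  have hd : p.natDegree = n := by
    have : p.degree = (n : ℕ) := by
      rw [hp_def, degree_add_eq_left_of_degree_lt (by rwa [degree_X_pow]), degree_X_pow]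
    exact natDegree_eq_of_degree_eq_some this
  have hck : ∀ i : Fin n, p.coeff (i : ℕ) = (a i : ℂ) := by
    intro i
    rw [hp_def, coeff_add, coeff_X_pow, if_neg (by omega), zero_add, finset_sum_coeff]
    rw [Fintype.sum_eq_single i (fun j hj => by
      rw [coeff_C_mul, coeff_X_pow, if_neg (fun h => hj (Fin.ext h.symm)), mul_zero])]
    rw [coeff_C_mul, coeff_X_pow, if_pos rfl, mul_one]
  have hcn : p.coeff n = 1 := by
    have := hm.coeff_natDegree
    rwa [hd] at this
  have hproots : ∀ z, p.eval z = 0 → 1 ≤ ‖z‖ := by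
    intro z hz
    apply hroots z
    rw [← hz, hp_def]
    simp [eval_finset_sum]
  have hTrec : ∀ m, ∑ k ∈ Finset.range (n+1),
      p.coeff k * ((t (m+k) : ℝ) : ℂ) = 0 := by
    intro m
    rw [Finset.sum_range_succ, hcn, one_mul]
    have e1 : ∑ k ∈ Finset.range n, p.coeff k * ((t (m+k) : ℝ) : ℂ)
        = ∑ i : Fin n, (a i : ℂ) * ((t (m + i) : ℝ) : ℂ) := by
      rw [← Fin.sum_univ_eq_sum_range]
      exact Finset.sum_congr rfl fun i _ => by rw [hck i]
    rw [e1]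
    have h := hrec m
    have : ((t (m+n) : ℝ) : ℂ) = -∑ i : Fin n, (a i : ℂ) * ((t (m + i) : ℝ) : ℂ) := by
      rw [h]
      push_cast
      ring
    rw [this]
    ring
  have hTconv : Tendsto (fun m => ((t m : ℝ) : ℂ)) atTop (𝓝 0) := by
    have := (Complex.continuous_ofReal.tendsto 0).comp hconv
    simpa [Function.comp_def] using this
  intro m
  have := key16 n p hm hd hproots (fun m => ((t m : ℝ) : ℂ)) hTrec hTconv m
  exact_mod_cast this
end

section
/- Let M be an n×n matrix with rational entries and nonzero determinant, let v ∈ ℚ^n be a column vector such that v, Mv, …, M^{n−1}v are linearly independent, and let L ∈ ℝ^n be a row vector. If there is an N such that L·M^m·v is an integer for every m ≥ N, then every entry of L is rational. -/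
open Matrix

/-- if `M` is a rational `n×n` matrix with nonzero determinant,
`v ∈ ℚ^n` is such that `v, Mv, …, M^{n-1}v` are linearly independent, and the
real row vector `L` is such that `L·M^m·v` is an integer for all large `m`,
then every entry of `L` is rational. -/
theorem statement17 (n : ℕ) (M : Matrix (Fin n) (Fin n) ℚ) (hdet : M.det ≠ 0)
    (v : Fin n → ℚ)
    (hv : LinearIndependent ℚ (fun i : Fin n => (M ^ (i : ℕ)).mulVec v))
    (L : Fin n → ℝ)
    (h : ∃ N : ℕ, ∀ m : ℕ, N ≤ m → ∃ j : ℤ,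
      dotProduct (Matrix.vecMul L ((M.map (Rat.cast : ℚ → ℝ)) ^ m))
        (fun i => ((v i : ℝ))) = (j : ℝ)) :
    ∀ i : Fin n, ∃ q : ℚ, L i = (q : ℝ) := by
  obtain ⟨N, h⟩ := h
  set W : Matrix (Fin n) (Fin n) ℚ :=
    Matrix.of fun i k => ((M ^ (N + (k : ℕ))).mulVec v) i with hWdef
  -- W is invertible
  have hMN : IsUnit (M ^ N) := by
    apply (Matrix.isUnit_iff_isUnit_det _).2
    rw [Matrix.det_pow]
    exact (isUnit_iff_ne_zero.2 (pow_ne_zero _ hdet))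
  have hWu : IsUnit W := by
    rw [← Matrix.linearIndependent_cols_iff_isUnit]
    have : (fun k : Fin n => Wᵀ k) =
        (fun x => (M ^ N).mulVec x) ∘ fun k : Fin n => (M ^ (k : ℕ)).mulVec v := by
      funext k
      simp only [Function.comp_apply, Matrix.mulVec_mulVec, ← pow_add]
      rfl
    rw [show W.col = fun k : Fin n => Wᵀ k from rfl, this]
    exact hv.map' ((M ^ N).mulVecLin)
      (LinearMap.ker_eq_bot.2 (Matrix.mulVec_injective_iff_isUnit.2 hMN))
  -- entries of L ᵥ* (W.map cast) are rational
  have key : ∀ k : Fin n, ∃ q : ℚ,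
      Matrix.vecMul L (W.map (Rat.cast : ℚ → ℝ)) k = (q : ℝ) := by
    intro k
    obtain ⟨j, hj⟩ := h (N + (k : ℕ)) (Nat.le_add_right _ _)
    refine ⟨(j : ℚ), ?_⟩
    rw [show ((((j : ℚ)) : ℝ)) = (j : ℝ) by push_cast; ring, ← hj]
    have hpow : (M.map (Rat.cast : ℚ → ℝ)) ^ (N + (k : ℕ))
        = (M ^ (N + (k : ℕ))).map (Rat.cast : ℚ → ℝ) := by
      simpa using (map_pow ((Rat.castHom ℝ).mapMatrix) M (N + (k : ℕ))).symm
    rw [hpow]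
    rw [← Matrix.dotProduct_mulVec]
    have hmv : ((M ^ (N + (k : ℕ))).map (Rat.cast : ℚ → ℝ)).mulVec
        (fun i => ((v i : ℝ))) = fun i => (((M ^ (N + (k : ℕ))).mulVec v i : ℝ)) := by
      funext i
      simpa [Function.comp_def] using
        ((Rat.castHom ℝ).map_mulVec (M ^ (N + (k : ℕ))) v i).symm
    rw [hmv]
    simp [Matrix.vecMul, dotProduct, hWdef]
  choose c hc using key
  -- now solve for L
  set q : Fin n → ℚ := Matrix.vecMul c W⁻¹ with hq
  have hWdetu : IsUnit W.det := (Matrix.isUnit_iff_isUnit_det _).1 hWu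
  have hWmu : IsUnit (W.map (Rat.cast : ℚ → ℝ)) := hWu.map (Rat.castHom ℝ).mapMatrix
  have hinj : Function.Injective fun x : Fin n → ℝ =>
      Matrix.vecMul x (W.map (Rat.cast : ℚ → ℝ)) :=
    Matrix.vecMul_injective_iff_isUnit.2 hWmu
  have hLq : L = fun i => ((q i : ℝ)) := by
    apply hinj
    have h1 : Matrix.vecMul (fun i => ((q i : ℝ))) (W.map (Rat.cast : ℚ → ℝ))
        = fun k => ((((Matrix.vecMul q W k : ℚ)) : ℝ)) := by
      funext k
      simpa [Function.comp_def] using ((Rat.castHom ℝ).map_vecMul W q k).symm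
    have h2 : Matrix.vecMul q W = c := by
      rw [hq, Matrix.vecMul_vecMul, Matrix.nonsing_inv_mul _ hWdetu, Matrix.vecMul_one]
    simp only [h1, h2]
    funext k
    exact hc k
  intro i
  exact ⟨q i, by rw [hLq]⟩
end
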